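/- Let d ≥ 1 and define the Waring rank of a univariate polynomial f ∈ ℝ[x] of degree n as the minimal s such that f = Σ_{i=1}^{s} α_i (x + a_i)^n with α_i, a_i ∈ ℝ. Then the real Waring rank of H(x) = (x+1)^{2d+2} − x^{2d+2} equals d+1. -/

import Mathlib

open Polynomial MeasureTheory Set

noncomputable def Jint (p : Polynomial ℝ) : ℝ := ∫ t in (0:ℝ)..1, p.eval t

lemma Jint_intble (p : Polynomial ℝ) : IntervalIntegrable (fun t => p.eval t) volume 0 1 :=
  (p.continuous).intervalIntegrable 0 1

lemma Jint_add (p q : Polynomial ℝ) : Jint (p + q) = Jint p + Jint q := by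
  unfold Jint
  simp only [eval_add]
  exact intervalIntegral.integral_add (Jint_intble p) (Jint_intble q)

lemma Jint_sub (p q : Polynomial ℝ) : Jint (p - q) = Jint p - Jint q := by
  unfold Jint
  simp only [eval_sub]
  exact intervalIntegral.integral_sub (Jint_intble p) (Jint_intble q)

lemma Jint_C_mul (c : ℝ) (p : Polynomial ℝ) : Jint (C c * p) = c * Jint p := by
  unfold Jint
  simp only [eval_mul, eval_C]
  exact intervalIntegral.integral_const_mul c _

lemma Jint_sum {ι : Type*} (s : Finset ι) (f : ι → Polynomial ℝ) :
    Jint (∑ i ∈ s, f i) = ∑ i ∈ s, Jint (f i) := by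
  classical
  induction s using Finset.induction with
  | empty => simp [Jint]
  | insert _ _ h ih => rw [Finset.sum_insert h, Jint_add, ih, Finset.sum_insert h]

lemma Jint_X_add_C (x : ℝ) (m : ℕ) :
    Jint ((X + C x) ^ m) = ((x + 1) ^ (m + 1) - x ^ (m + 1)) / (m + 1) := by
  unfold Jint
  have : (fun t : ℝ => eval t ((X + C x) ^ m)) = fun t : ℝ => (x + t) ^ m := by
    funext t; simp [add_comm]
  rw [this]
  rw [intervalIntegral.integral_comp_add_left (fun u : ℝ => u ^ m) x]
  rw [integral_pow]
  simp

lemma Jint_derivative (g : Polynomial ℝ) :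
    Jint (derivative g) = g.eval 1 - g.eval 0 := by
  unfold Jint
  exact intervalIntegral.integral_deriv_eq_sub'
    (fun x => g.eval x)
    (funext fun x => Polynomial.deriv g)
    (fun x _ => g.differentiable.differentiableAt)
    ((g.derivative.continuous).continuousOn)

lemma Jint_sq_pos (q : Polynomial ℝ) (hq : q ≠ 0) : 0 < Jint (q ^ 2) := by
  unfold Jint
  have hev : (fun t : ℝ => eval t (q ^ 2)) = fun t => (q.eval t) ^ 2 := by
    funext t; simp
  rw [hev]
  rw [intervalIntegral.integral_pos_iff_support_of_nonneg_ae
    (Filter.Eventually.of_forall fun t => sq_nonneg _)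
    ((continuous_pow 2 |>.comp q.continuous).intervalIntegrable 0 1)]
  refine ⟨one_pos, ?_⟩
  have hsub : Ioc (0:ℝ) 1 \ {x | q.IsRoot x} ⊆ Function.support (fun t => (q.eval t)^2) ∩ Ioc 0 1 := by
    intro x hx
    refine ⟨?_, hx.1⟩
    simp only [Function.mem_support]
    exact pow_ne_zero 2 (fun h => hx.2 h)
  have h1 : volume (Ioc (0:ℝ) 1 \ {x | q.IsRoot x}) = 1 := by
    rw [measure_diff_null ((q.finite_setOf_isRoot hq).measure_zero _)]
    simp
  calc (0:ENNReal) < 1 := by norm_num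
    _ = volume (Ioc (0:ℝ) 1 \ {x | q.IsRoot x}) := h1.symm
    _ ≤ _ := measure_mono hsub

noncomputable def Fpol (d : ℕ) : Polynomial ℝ := (X * (X - C 1)) ^ (d + 1)

lemma Fpol_monic (d : ℕ) : (Fpol d).Monic := ((monic_X).mul (monic_X_sub_C 1)).pow _

lemma Fpol_natDegree (d : ℕ) : (Fpol d).natDegree = 2 * d + 2 := by
  unfold Fpol
  rw [natDegree_pow, natDegree_mul X_ne_zero (X_sub_C_ne_zero 1), natDegree_X, natDegree_X_sub_C]
  ring

noncomputable def Lpol (d : ℕ) : Polynomial ℝ := derivative^[d + 1] (Fpol d)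

lemma Lpol_coeff (d : ℕ) :
    (Lpol d).coeff (d + 1) = ((2 * d + 2).descFactorial (d + 1) : ℝ) := by
  unfold Lpol
  rw [coeff_iterate_derivative]
  have h1 : d + 1 + (d + 1) = 2 * d + 2 := by ring
  rw [h1]
  have h2 : (Fpol d).coeff (2 * d + 2) = 1 := by
    have := (Fpol_monic d).coeff_natDegree
    rwa [Fpol_natDegree d] at this
  rw [h2]
  simp

lemma Lpol_natDegree (d : ℕ) : (Lpol d).natDegree = d + 1 := by
  have hle : (Lpol d).natDegree ≤ d + 1 := by
    have := natDegree_iterate_derivative (Fpol d) (d + 1)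
    rw [Fpol_natDegree d] at this
    unfold Lpol
    omega
  have hne : (Lpol d).coeff (d + 1) ≠ 0 := by
    rw [Lpol_coeff d]
    have h3 : (2 * d + 2).descFactorial (d + 1) ≠ 0 := by
      rw [Ne, Nat.descFactorial_eq_zero_iff_lt]; omega
    exact_mod_cast h3
  exact le_antisymm hle (le_natDegree_of_ne_zero hne)

lemma Lpol_ne_zero (d : ℕ) : Lpol d ≠ 0 := by
  intro h
  have := Lpol_coeff d
  rw [h, coeff_zero] at this
  have h3 : (2 * d + 2).descFactorial (d + 1) ≠ 0 := by
    rw [Ne, Nat.descFactorial_eq_zero_iff_lt]; omega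
  exact h3 (by exact_mod_cast this.symm)

lemma Fpol_iter_eval (d k : ℕ) (hk : k ≤ d) :
    (derivative^[k] (Fpol d)).eval 0 = 0 ∧ (derivative^[k] (Fpol d)).eval 1 = 0 := by
  have hX : X ^ (d + 1) ∣ Fpol d := by
    unfold Fpol; rw [mul_pow]; exact dvd_mul_right _ _
  have hX1 : (X - C 1) ^ (d + 1) ∣ Fpol d := by
    unfold Fpol; rw [mul_pow]; exact dvd_mul_left _ _
  constructor
  · have h1 : X ^ (d + 1 - k) ∣ derivative^[k] (Fpol d) :=
      pow_sub_dvd_iterate_derivative_of_pow_dvd k hX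
    have h2 : (X : Polynomial ℝ) ∣ derivative^[k] (Fpol d) :=
      dvd_trans (dvd_pow_self X (by omega : d + 1 - k ≠ 0)) h1
    obtain ⟨g, hg⟩ := h2
    rw [hg]; simp
  · have h1 : (X - C 1) ^ (d + 1 - k) ∣ derivative^[k] (Fpol d) :=
      pow_sub_dvd_iterate_derivative_of_pow_dvd k hX1
    have h2 : ((X - C 1 : Polynomial ℝ)) ∣ derivative^[k] (Fpol d) :=
      dvd_trans (dvd_pow_self _ (by omega : d + 1 - k ≠ 0)) h1
    obtain ⟨g, hg⟩ := h2
    rw [hg]; simp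
lemma exists_roots (d : ℕ) : ∀ k, k ≤ d + 1 → ∃ r : Fin k → ℝ,
    StrictMono r ∧ (∀ i, r i ∈ Set.Ioo (0:ℝ) 1) ∧
    ∀ i, (derivative^[k] (Fpol d)).eval (r i) = 0 := by
  intro k
  induction k with
  | zero =>
    intro _
    exact ⟨Fin.elim0, fun i => i.elim0, fun i => i.elim0, fun i => i.elim0⟩
  | succ k ih =>
    intro hk
    obtain ⟨r, hmono, hIoo, hroot⟩ := ih (by omega)
    have hk' : k ≤ d := by omega
    obtain ⟨h0, h1⟩ := Fpol_iter_eval d k hk'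
    set g := derivative^[k] (Fpol d) with hg
    -- extended node sequence
    set s : ℕ → ℝ := fun i => if i = 0 then 0 else if h : i - 1 < k then r ⟨i - 1, h⟩ else 1
      with hs
    have hs0 : s 0 = 0 := by simp [hs]
    have hsk : s (k + 1) = 1 := by simp [hs]
    have hsr : ∀ (i : ℕ) (h : i < k), s (i + 1) = r ⟨i, h⟩ := by
      intro i h; simp [hs, h]
    have hstep : ∀ i ≤ k, s i < s (i + 1) := by
      intro i hi
      rcases Nat.eq_zero_or_pos i with rfl | hipos
      · rcases Nat.eq_zero_or_pos k with rfl | hkpos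
        · rw [hs0, hsk]; norm_num
        · rw [hs0, hsr 0 hkpos]
          exact (hIoo _).1
      · have hi1 : i - 1 < k := by omega
        have hsi : s i = r ⟨i - 1, hi1⟩ := by
          simp [hs, Nat.pos_iff_ne_zero.mp hipos, hi1]
        rw [hsi]
        rcases Nat.lt_or_ge i k with hik | hik
        · rw [hsr i hik]
          exact hmono (by simp [Fin.lt_def]; omega)
        · have : i = k := by omega
          subst this
          rw [hsk]
          exact (hIoo _).2
    have hmono' : ∀ j i : ℕ, i < j → j ≤ k + 1 → s i < s j := by
      intro j
      induction j with
      | zero => omega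
      | succ j ihj =>
        intro i hij hj
        rcases Nat.lt_or_ge i j with h | h
        · exact lt_trans (ihj i h (by omega)) (hstep j (by omega))
        · have : i = j := by omega
          subst this
          exact hstep i (by omega)
    have hsroot : ∀ i ≤ k + 1, g.eval (s i) = 0 := by
      intro i hi
      rcases Nat.eq_zero_or_pos i with rfl | hipos
      · rw [hs0]; exact h0
      · rcases Nat.lt_or_ge (i - 1) k with h | h
        · have hsi : s i = r ⟨i - 1, h⟩ := by
            simp [hs, Nat.pos_iff_ne_zero.mp hipos, h]
          rw [hsi]
          exact hroot _
        · have : i = k + 1 := by omega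
          rw [this, hsk]
          exact h1
    have hs_nonneg : ∀ i ≤ k + 1, 0 ≤ s i := by
      intro i hi
      rcases Nat.eq_zero_or_pos i with rfl | hipos
      · rw [hs0]
      · rcases Nat.lt_or_ge (i - 1) k with h | h
        · have hsi : s i = r ⟨i - 1, h⟩ := by
            simp [hs, Nat.pos_iff_ne_zero.mp hipos, h]
          rw [hsi]
          exact le_of_lt (hIoo _).1
        · have : i = k + 1 := by omega
          rw [this, hsk]; norm_num
    have hs_le1 : ∀ i ≤ k + 1, s i ≤ 1 := by
      intro i hi
      rcases Nat.eq_zero_or_pos i with rfl | hipos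
      · rw [hs0]; norm_num
      · rcases Nat.lt_or_ge (i - 1) k with h | h
        · have hsi : s i = r ⟨i - 1, h⟩ := by
            simp [hs, Nat.pos_iff_ne_zero.mp hipos, h]
          rw [hsi]
          exact le_of_lt (hIoo _).2
        · have : i = k + 1 := by omega
          rw [this, hsk]
    -- Rolle on each gap
    have hex : ∀ i : Fin (k + 1), ∃ c,
        c ∈ Set.Ioo (s i) (s (i + 1)) ∧ (derivative^[k + 1] (Fpol d)).eval c = 0 := by
      intro i
      have hik : (i : ℕ) ≤ k := by omega
      have hab : s i < s (i + 1) := hstep i hik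
      have heq : g.eval (s i) = g.eval (s (i + 1)) := by
        rw [hsroot i (by omega), hsroot (i + 1) (by omega)]
      obtain ⟨c, hc, hder⟩ := exists_deriv_eq_zero hab
        (g.continuous.continuousOn) heq
      refine ⟨c, hc, ?_⟩
      rw [Function.iterate_succ_apply', ← hg, ← Polynomial.deriv g]
      exact hder
    choose c hcmem hcroot using hex
    refine ⟨c, ?_, ?_, hcroot⟩
    · intro i j hij
      have h1 : c i < s ((i : ℕ) + 1) := (hcmem i).2
      have h2 : s (j : ℕ) < c j := (hcmem j).1
      have h3 : s ((i : ℕ) + 1) ≤ s (j : ℕ) := by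
        rcases Nat.lt_or_ge ((i : ℕ) + 1) (j : ℕ) with h | h
        · exact le_of_lt (hmono' _ _ h (by omega))
        · have : (i : ℕ) + 1 = (j : ℕ) := by
            have := Fin.lt_def.mp hij; omega
          rw [this]
      linarith
    · intro i
      constructor
      · calc (0:ℝ) ≤ s (i : ℕ) := hs_nonneg _ (by omega)
          _ < c i := (hcmem i).1
      · calc c i < s ((i : ℕ) + 1) := (hcmem i).2
          _ ≤ 1 := hs_le1 _ (by omega)
lemma Jint_zero : Jint 0 = 0 := by simp [Jint]

lemma Jint_iter_mul (d : ℕ) : ∀ j, j ≤ d → ∀ q : Polynomial ℝ, q.natDegree ≤ j →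
    Jint (derivative^[j + 1] (Fpol d) * q) = 0 := by
  have key : ∀ j, j ≤ d → ∀ q : Polynomial ℝ,
      Jint (derivative^[j + 1] (Fpol d) * q) =
        - Jint (derivative^[j] (Fpol d) * derivative q) := by
    intro j hj q
    obtain ⟨h0, h1⟩ := Fpol_iter_eval d j hj
    have hder : derivative^[j + 1] (Fpol d) * q =
        derivative (derivative^[j] (Fpol d) * q) -
          derivative^[j] (Fpol d) * derivative q := by
      rw [derivative_mul, Function.iterate_succ_apply']
      ring
    rw [hder, Jint_sub, Jint_derivative]
    simp [h0, h1]
  intro j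
  induction j with
  | zero =>
    intro hj q hq
    rw [key 0 hj q]
    have : derivative q = 0 := by
      rw [eq_C_of_natDegree_le_zero hq, derivative_C]
    rw [this, mul_zero, Jint_zero, neg_zero]
  | succ j ihj =>
    intro hj q hq
    rw [key (j + 1) hj q]
    have hq' : (derivative q).natDegree ≤ j :=
      le_trans (natDegree_derivative_le q) (by omega)
    rw [ihj (by omega) (derivative q) hq', neg_zero]

lemma quad (d : ℕ) : ∃ (t w : Fin (d + 1) → ℝ), Function.Injective t ∧
    ∀ p : Polynomial ℝ, p.natDegree ≤ 2 * d + 1 →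
      Jint p = ∑ i, w i * p.eval (t i) := by
  obtain ⟨t, hmono, _, hroot⟩ := exists_roots d (d + 1) le_rfl
  have htinj : Function.Injective t := hmono.injective
  have hLne : Lpol d ≠ 0 := Lpol_ne_zero d
  have hlc : (Lpol d).leadingCoeff ≠ 0 := leadingCoeff_ne_zero.mpr hLne
  set M := Lpol d * C (Lpol d).leadingCoeff⁻¹ with hM
  have hMm : M.Monic := monic_mul_leadingCoeff_inv hLne
  have hMdeg : M.natDegree = d + 1 := by
    rw [hM, natDegree_mul hLne (by simpa using inv_ne_zero hlc), natDegree_C, add_zero,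
      Lpol_natDegree]
  have hMroot : ∀ i, M.eval (t i) = 0 := by
    intro i
    rw [hM, eval_mul]
    have : (Lpol d).eval (t i) = 0 := hroot i
    rw [this, zero_mul]
  refine ⟨t, fun i => Jint (Lagrange.basis Finset.univ t i), htinj, ?_⟩
  intro p hp
  have hinj' : Set.InjOn t ↑(Finset.univ : Finset (Fin (d + 1))) :=
    fun x _ y _ h => htinj h
  have hdecomp := modByMonic_add_div p M
  have hqdeg : (C (Lpol d).leadingCoeff⁻¹ * (p /ₘ M)).natDegree ≤ d := by
    refine le_trans (natDegree_C_mul_le _ _) ?_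
    rw [natDegree_divByMonic p hMm, hMdeg]
    omega
  have hortho : Jint (M * (p /ₘ M)) = 0 := by
    have hrw : M * (p /ₘ M) =
        derivative^[d + 1] (Fpol d) * (C (Lpol d).leadingCoeff⁻¹ * (p /ₘ M)) := by
      rw [hM]; unfold Lpol; ring
    rw [hrw]
    exact Jint_iter_mul d d le_rfl _ hqdeg
  have hrdeg : (p %ₘ M).degree < ((d + 1 : ℕ) : WithBot ℕ) := by
    have := degree_modByMonic_lt p hMm
    rwa [degree_eq_natDegree hMm.ne_zero, hMdeg] at this
  have hcard : (p %ₘ M).degree < ((Finset.univ : Finset (Fin (d + 1))).card : WithBot ℕ) := by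
    simpa using hrdeg
  have hr_interp := Lagrange.eq_interpolate hinj' hcard
  have hJr : Jint (p %ₘ M) = ∑ i, Jint (Lagrange.basis Finset.univ t i) * (p %ₘ M).eval (t i) := by
    conv_lhs => rw [hr_interp, Lagrange.interpolate_apply, Jint_sum]
    refine Finset.sum_congr rfl fun i _ => ?_
    rw [Jint_C_mul]; ring
  have hevp : ∀ i, p.eval (t i) = (p %ₘ M).eval (t i) := by
    intro i
    conv_lhs => rw [← hdecomp]
    rw [eval_add, eval_mul, hMroot i, zero_mul, add_zero]
  calc Jint p = Jint (p %ₘ M + M * (p /ₘ M)) := by rw [hdecomp]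
    _ = Jint (p %ₘ M) + Jint (M * (p /ₘ M)) := Jint_add _ _
    _ = ∑ i, Jint (Lagrange.basis Finset.univ t i) * (p %ₘ M).eval (t i) := by
        rw [hortho, add_zero, hJr]
    _ = ∑ i, Jint (Lagrange.basis Finset.univ t i) * p.eval (t i) := by
        refine Finset.sum_congr rfl fun i _ => ?_
        rw [hevp i]
lemma mem_upper (d : ℕ) : ∃ (α a : Fin (d + 1) → ℝ),
    ((X + 1) ^ (2 * d + 2) - X ^ (2 * d + 2) : Polynomial ℝ) =
      ∑ i : Fin (d + 1), C (α i) * (X + C (a i)) ^ (2 * d + 1) := by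
  obtain ⟨t, w, htinj, hquad⟩ := quad d
  refine ⟨fun i => (2 * (d : ℝ) + 2) * w i, t, ?_⟩
  apply Polynomial.funext
  intro x
  have hdeg : ((X + C x) ^ (2 * d + 1) : Polynomial ℝ).natDegree ≤ 2 * d + 1 := by
    rw [natDegree_pow, natDegree_X_add_C, mul_one]
  have h1 := hquad _ hdeg
  rw [Jint_X_add_C] at h1
  simp only [eval_pow, eval_add, eval_X, eval_C, eval_sub, eval_one, eval_finset_sum,
    eval_mul] at h1 ⊢
  have hsum : ∑ i, w i * (t i + x) ^ (2 * d + 1) = ∑ i, w i * (x + t i) ^ (2 * d + 1) :=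
    Finset.sum_congr rfl fun i _ => by rw [add_comm (t i) x]
  rw [hsum] at h1
  have hNne : ((2 * d + 1 : ℕ) : ℝ) + 1 ≠ 0 := by positivity
  rw [div_eq_iff hNne] at h1
  have he : 2 * d + 1 + 1 = 2 * d + 2 := by ring
  rw [he] at h1
  rw [h1, Finset.sum_mul]
  refine Finset.sum_congr rfl fun i _ => ?_
  push_cast
  ring

noncomputable def lamF (s : ℕ) (β a : Fin s → ℝ) (p : Polynomial ℝ) : ℝ :=
  Jint p - ∑ i, β i * p.eval (a i)

lemma lamF_C_mul (s : ℕ) (β a : Fin s → ℝ) (c : ℝ) (p : Polynomial ℝ) :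
    lamF s β a (C c * p) = c * lamF s β a p := by
  unfold lamF
  rw [Jint_C_mul, mul_sub, Finset.mul_sum]
  congr 1
  refine Finset.sum_congr rfl fun i _ => ?_
  rw [eval_mul, eval_C]; ring

lemma lamF_sum (s : ℕ) (β a : Fin s → ℝ) {ι : Type*} (T : Finset ι) (f : ι → Polynomial ℝ) :
    lamF s β a (∑ k ∈ T, f k) = ∑ k ∈ T, lamF s β a (f k) := by
  unfold lamF
  rw [Jint_sum, Finset.sum_sub_distrib]
  congr 1
  simp_rw [eval_finset_sum, Finset.mul_sum]
  exact Finset.sum_comm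

lemma lower (d s : ℕ) (hs : s ≤ d) (α a : Fin s → ℝ)
    (heq : ((X + 1) ^ (2 * d + 2) - X ^ (2 * d + 2) : Polynomial ℝ) =
      ∑ i : Fin s, C (α i) * (X + C (a i)) ^ (2 * d + 1)) : False := by
  set β : Fin s → ℝ := fun i => α i / (2 * (d : ℝ) + 2) with hβ
  have hx : ∀ x : ℝ, lamF s β a ((X + C x) ^ (2 * d + 1)) = 0 := by
    intro x
    unfold lamF
    rw [Jint_X_add_C]
    have hev := congrArg (eval x) heq
    simp only [eval_sub, eval_pow, eval_add, eval_one, eval_X, eval_finset_sum, eval_mul,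
      eval_C] at hev
    simp only [eval_pow, eval_add, eval_X, eval_C]
    have he : 2 * d + 1 + 1 = 2 * d + 2 := by ring
    rw [he, sub_eq_zero, hev, Finset.sum_div]
    refine Finset.sum_congr rfl fun i _ => ?_
    rw [hβ]
    have h2 : ((2 * d + 1 : ℕ) : ℝ) + 1 = 2 * (d : ℝ) + 2 := by push_cast; ring
    rw [h2, add_comm (a i) x]
    ring
  have hmon : ∀ k, k ≤ 2 * d + 1 → lamF s β a (X ^ k) = 0 := by
    have hGfun : ∀ x : ℝ, eval x (∑ k ∈ Finset.range (2 * d + 2),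
        C (((2 * d + 1).choose k : ℝ) * lamF s β a (X ^ k)) * X ^ (2 * d + 1 - k)) = 0 := by
      intro x
      have hexp : ((X + C x) ^ (2 * d + 1) : Polynomial ℝ) =
          ∑ k ∈ Finset.range (2 * d + 2),
            C (x ^ (2 * d + 1 - k) * ((2 * d + 1).choose k : ℝ)) * X ^ k := by
        rw [add_pow]
        refine Finset.sum_congr rfl fun k hk => ?_
        rw [map_mul, ← C_pow, map_natCast]
        ring
      have h0 := hx x
      rw [hexp, lamF_sum] at h0
      simp only [lamF_C_mul] at h0
      rw [eval_finset_sum]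
      simp only [eval_mul, eval_C, eval_pow, eval_X]
      calc ∑ k ∈ Finset.range (2 * d + 2),
            ((2 * d + 1).choose k : ℝ) * lamF s β a (X ^ k) * x ^ (2 * d + 1 - k)
          = ∑ k ∈ Finset.range (2 * d + 2),
            x ^ (2 * d + 1 - k) * ((2 * d + 1).choose k : ℝ) * lamF s β a (X ^ k) :=
            Finset.sum_congr rfl fun k _ => by ring
        _ = 0 := h0
    have hG : (∑ k ∈ Finset.range (2 * d + 2),
        C (((2 * d + 1).choose k : ℝ) * lamF s β a (X ^ k)) * X ^ (2 * d + 1 - k)) = 0 :=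
      Polynomial.funext fun x => by rw [hGfun x, eval_zero]
    intro k0 hk0
    have hcoeff := congrArg (fun p => coeff p (2 * d + 1 - k0)) hG
    simp only [coeff_zero, finset_sum_coeff] at hcoeff
    rw [Finset.sum_eq_single k0] at hcoeff
    · rw [coeff_C_mul, coeff_X_pow, if_pos rfl, mul_one] at hcoeff
      have hch : ((2 * d + 1).choose k0 : ℝ) ≠ 0 := by
        have := Nat.choose_pos hk0
        positivity
      exact (mul_eq_zero.mp hcoeff).resolve_left hch
    · intro k hk hne
      have hkr := Finset.mem_range.mp hk
      rw [coeff_C_mul, coeff_X_pow, if_neg (fun h => hne (by omega)), mul_zero]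
    · intro h
      exact absurd (Finset.mem_range.mpr (by omega)) h
  have hpoly : ∀ p : Polynomial ℝ, p.natDegree ≤ 2 * d + 1 → lamF s β a p = 0 := by
    intro p hp
    conv_lhs => rw [p.as_sum_range' (2 * d + 2) (by omega)]
    simp_rw [← C_mul_X_pow_eq_monomial]
    rw [lamF_sum]
    refine Finset.sum_eq_zero fun k hk => ?_
    rw [lamF_C_mul, hmon k (by have := Finset.mem_range.mp hk; omega), mul_zero]
  -- final contradiction
  set q : Polynomial ℝ := ∏ i : Fin s, (X - C (a i)) with hq
  have hqm : q.Monic := monic_prod_of_monic _ _ fun i _ => monic_X_sub_C _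
  have hdq : (q ^ 2).natDegree ≤ 2 * d + 1 := by
    rw [natDegree_pow, hq, natDegree_prod _ _ (fun i _ => X_sub_C_ne_zero _)]
    simp only [natDegree_X_sub_C]
    simp only [Finset.sum_const, Finset.card_univ, Fintype.card_fin, smul_eq_mul, mul_one]
    omega
  have h0 : lamF s β a (q ^ 2) = 0 := hpoly _ hdq
  have heval : ∀ i, (q ^ 2).eval (a i) = 0 := by
    intro i
    rw [eval_pow]
    have : q.eval (a i) = 0 := by
      rw [hq, eval_prod]
      exact Finset.prod_eq_zero (Finset.mem_univ i) (by simp)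
    rw [this]
    ring
  have hJ : Jint (q ^ 2) = 0 := by
    unfold lamF at h0
    have : ∑ i, β i * (q ^ 2).eval (a i) = 0 :=
      Finset.sum_eq_zero fun i _ => by rw [heval i, mul_zero]
    rw [this, sub_zero] at h0
    exact h0
  exact absurd hJ (ne_of_gt (Jint_sq_pos q hqm.ne_zero))

theorem stmt10 (d : ℕ) (hd : 1 ≤ d) :
    IsLeast {s : ℕ | ∃ (α : Fin s → ℝ) (a : Fin s → ℝ),
        ((X + 1) ^ (2 * d + 2) - X ^ (2 * d + 2) : Polynomial ℝ) =
          ∑ i : Fin s, C (α i) * (X + C (a i)) ^ (2 * d + 1)}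
      (d + 1) := by
  constructor
  · exact mem_upper d
  · intro s hs
    by_contra hlt
    push_neg at hlt
    obtain ⟨α, a, heq⟩ := hs
    exact lower d s (by omega) α a heq
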